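/- Let γ : [0,L) → ℝ^2 be a unit-speed curve with continuous strictly-positive (or strictly-negative) signed curvature, converging to a point o as t → L, such that no tangent line of γ passes through o (i.e., γ(t) - o is never parallel to γ'(t)). If the tangent angle θ(t) is unbounded, then γ winds around o indefinitely: the angle of γ(t) - o is also unbounded. -/
import Mathlib


open Filter Topology

/-- (Winding of a spiral about its vortex.) Let `γ : [0,L) → ℝ²` be a
unit-speed curve with tangent angle `θ` (`γ' = (cos θ, sin θ)`, `θ' = k` continuous and of
constant strict sign), converging to `o` as `t → L`, whose tangent lines never pass through
`o` (`γ(t) - o` is never parallel to `γ'(t)`).  Write `γ(t) - o = r(t)•(cos φ(t), sin φ(t))`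
with `r > 0` and `φ` a continuous angle lift.  If `θ` is unbounded then `φ` is unbounded,
i.e. `γ` winds around `o` indefinitely. -/
theorem stmt_12 (L : ℝ) (hL : 0 < L) (γ : ℝ → ℝ × ℝ) (θ k φ r : ℝ → ℝ) (o : ℝ × ℝ)
    (hγ : ∀ t ∈ Set.Ico 0 L, HasDerivAt γ ((Real.cos (θ t), Real.sin (θ t)) : ℝ × ℝ) t)
    (hθ' : ∀ t ∈ Set.Ico 0 L, HasDerivAt θ (k t) t)
    (hkc : ContinuousOn k (Set.Ico 0 L))
    (hsign : (∀ t ∈ Set.Ico 0 L, 0 < k t) ∨ (∀ t ∈ Set.Ico 0 L, k t < 0))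
    (ho : Tendsto γ (nhdsWithin L (Set.Ico 0 L)) (nhds o))
    (hne : ∀ t ∈ Set.Ico 0 L, γ t ≠ o)
    (hpar : ∀ t ∈ Set.Ico 0 L,
      (γ t - o).1 * Real.sin (θ t) - (γ t - o).2 * Real.cos (θ t) ≠ 0)
    (hr : ∀ t ∈ Set.Ico 0 L, 0 < r t)
    (hφc : ContinuousOn φ (Set.Ico 0 L))
    (hlift : ∀ t ∈ Set.Ico 0 L,
      γ t - o = r t • ((Real.cos (φ t), Real.sin (φ t)) : ℝ × ℝ))
    (hub : ¬ BddAbove (θ '' Set.Ico 0 L) ∨ ¬ BddBelow (θ '' Set.Ico 0 L)) :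
    ¬ BddAbove (φ '' Set.Ico 0 L) ∨ ¬ BddBelow (φ '' Set.Ico 0 L) := by

  set s : Set ℝ := Set.Ico 0 L with hs
  have h0 : (0:ℝ) ∈ s := ⟨le_refl 0, hL⟩
  set ψ : ℝ → ℝ := fun t => θ t - φ t with hψ
  have hθc : ContinuousOn θ s := fun t ht => (hθ' t ht).continuousAt.continuousWithinAt
  have hψc : ContinuousOn ψ s := hθc.sub hφc
  have hsin : ∀ t ∈ s, Real.sin (ψ t) ≠ 0 := by
    intro t ht hcon
    have h := hpar t ht
    have hl := hlift t ht
    have h1 : (γ t - o).1 = r t * Real.cos (φ t) := by rw [hl]; rfl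
    have h2 : (γ t - o).2 = r t * Real.sin (φ t) := by rw [hl]; rfl
    rw [h1, h2] at h
    apply h
    rw [Real.sin_sub] at hcon
    nlinarith [hr t ht]
  set n : ℤ := ⌊ψ 0 / Real.pi⌋ with hn
  have hπ : 0 < Real.pi := Real.pi_pos
  have hlo0 : (n:ℝ) * Real.pi ≤ ψ 0 := by
    have h := Int.floor_le (ψ 0 / Real.pi)
    rw [← hn] at h
    calc (n:ℝ) * Real.pi ≤ (ψ 0 / Real.pi) * Real.pi := by nlinarith
    _ = ψ 0 := by field_simp
  have hhi0 : ψ 0 ≤ ((n:ℝ)+1) * Real.pi := by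
    have h := (Int.lt_floor_add_one (ψ 0 / Real.pi)).le
    rw [← hn] at h
    calc ψ 0 = (ψ 0 / Real.pi) * Real.pi := by field_simp
    _ ≤ ((n:ℝ)+1) * Real.pi := by nlinarith
  have hbound : ∀ t ∈ s, (n:ℝ) * Real.pi ≤ ψ t ∧ ψ t ≤ ((n:ℝ)+1) * Real.pi := by
    intro t ht
    have hsub : Set.Icc (0:ℝ) t ⊆ s := fun x hx => ⟨hx.1, lt_of_le_of_lt hx.2 ht.2⟩
    have hc : ContinuousOn ψ (Set.Icc 0 t) := hψc.mono hsub
    constructor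
    · by_contra hlt
      push_neg at hlt
      have hmem : (n:ℝ) * Real.pi ∈ Set.Icc (ψ t) (ψ 0) := ⟨hlt.le, hlo0⟩
      obtain ⟨c, hc1, hc2⟩ := intermediate_value_Icc' ht.1 hc hmem
      exact hsin c (hsub hc1) (by rw [hc2]; exact Real.sin_int_mul_pi n)
    · by_contra hlt
      push_neg at hlt
      have hmem : ((n:ℝ)+1) * Real.pi ∈ Set.Icc (ψ 0) (ψ t) := ⟨hhi0, hlt.le⟩
      obtain ⟨c, hc1, hc2⟩ := intermediate_value_Icc ht.1 hc hmem
      have hz : Real.sin (((n:ℝ)+1) * Real.pi) = 0 := by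
        have h := Real.sin_int_mul_pi (n+1)
        push_cast at h
        exact h
      exact hsin c (hsub hc1) (by rw [hc2]; exact hz)
  rcases hub with hub | hub
  · left
    rintro ⟨M, hM⟩
    apply hub
    refine ⟨M + ((n:ℝ)+1) * Real.pi, ?_⟩
    rintro x ⟨t, ht, rfl⟩
    have h1 : φ t ≤ M := hM ⟨t, ht, rfl⟩
    have h2 := (hbound t ht).2
    have h3 : ψ t = θ t - φ t := rfl
    linarith
  · right
    rintro ⟨M, hM⟩
    apply hub
    refine ⟨M + (n:ℝ) * Real.pi, ?_⟩
    rintro x ⟨t, ht, rfl⟩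
    have h1 : M ≤ φ t := hM ⟨t, ht, rfl⟩
    have h2 := (hbound t ht).1
    have h3 : ψ t = θ t - φ t := rfl
    linarith
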